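/- Suppose Q(x) = (q_{hk}(x)) is a symmetric positive definite real d×d matrix for every x ∈ ℝ^d, and let A^{hk} = q_{hk} G for h,k = 1,…,d, where G = (g_{ij}) is an m×m matrix-valued function with nonnegative bounded entries satisfying (G(x)ξ, ξ) ≥ 0 for all x ∈ ℝ^d, ξ ∈ ℝ^m, and let Λ_G > 0 be such that (G(x)ξ, ξ) ≤ Λ_G |ξ|² and Σ_{i,j} g_{ij}(x) η_i ξ_j ≤ Λ_G |η||ξ| hold as furnished by the boundedness of G. Then for every x ∈ ℝ^d and θ¹,…,θ^d ∈ ℂ^m, 0 ≤ Re Σ_{h,k=1}^d (A^{hk}(x)θ^k, θ^h) ≤ Λ_G Re Σ_{i=1}^m Σ_{h,k=1}^d q_{hk}(x) θ^k_i conj(θ^h_i) and |Im Σ_{h,k=1}^d (A^{hk}(x)θ^k, θ^h)| ≤ Λ_G Re Σ_{i=1}^m Σ_{h,k=1}^d q_{hk}(x) θ^k_i conj(θ^h_i); that is, the structural conditions on the coupling matrices hold with constant 𝒞 = Λ_G. -/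

import Mathlib

open ComplexConjugate

noncomputable section

/-- `Σ_{h,k} (A^{hk}(x) θ^k, θ^h)` for a family of `m × m` real matrix-valued functions
`A^{hk}` on `ℝ^d`, with `(u,v) = Σ_i u_i conj(v_i)` the Hermitian inner product. -/
def Aform {d m : ℕ} (A : Fin d → Fin d → Fin m → Fin m → (Fin d → ℝ) → ℝ)
    (x : Fin d → ℝ) (θ : Fin d → Fin m → ℂ) : ℂ :=
  ∑ h, ∑ k, ∑ i, ∑ j, (A h k i j x : ℂ) * θ k j * conj (θ h i)

/-- `Σ_{i=1}^m Σ_{h,k=1}^d q_{hk}(x) θ^k_i conj(θ^h_i)`. -/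
def Qdiagform {d m : ℕ} (q : Fin d → Fin d → (Fin d → ℝ) → ℝ)
    (x : Fin d → ℝ) (θ : Fin d → Fin m → ℂ) : ℂ :=
  ∑ i, ∑ h, ∑ k, (q h k x : ℂ) * θ k i * conj (θ h i)

/-- Rearrangement of a five-fold sum. -/
lemma sum_swap5 {M : Type*} [AddCommMonoid M] {a b : ℕ}
    (t : Fin a → Fin a → Fin b → Fin b → Fin a → M) :
    ∑ h, ∑ k, ∑ i, ∑ j, ∑ l, t h k i j l = ∑ l, ∑ i, ∑ j, ∑ h, ∑ k, t h k i j l := by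
  calc ∑ h, ∑ k, ∑ i, ∑ j, ∑ l, t h k i j l
      = ∑ h, ∑ k, ∑ i, ∑ l, ∑ j, t h k i j l :=
        Finset.sum_congr rfl fun h _ => Finset.sum_congr rfl fun k _ =>
          Finset.sum_congr rfl fun i _ => Finset.sum_comm
    _ = ∑ h, ∑ k, ∑ l, ∑ i, ∑ j, t h k i j l :=
        Finset.sum_congr rfl fun h _ => Finset.sum_congr rfl fun k _ => Finset.sum_comm
    _ = ∑ h, ∑ l, ∑ k, ∑ i, ∑ j, t h k i j l :=
        Finset.sum_congr rfl fun h _ => Finset.sum_comm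
    _ = ∑ l, ∑ h, ∑ k, ∑ i, ∑ j, t h k i j l := Finset.sum_comm
    _ = ∑ l, ∑ h, ∑ i, ∑ k, ∑ j, t h k i j l :=
        Finset.sum_congr rfl fun l _ => Finset.sum_congr rfl fun h _ => Finset.sum_comm
    _ = ∑ l, ∑ h, ∑ i, ∑ j, ∑ k, t h k i j l :=
        Finset.sum_congr rfl fun l _ => Finset.sum_congr rfl fun h _ =>
          Finset.sum_congr rfl fun i _ => Finset.sum_comm
    _ = ∑ l, ∑ i, ∑ h, ∑ j, ∑ k, t h k i j l :=
        Finset.sum_congr rfl fun l _ => Finset.sum_comm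
    _ = ∑ l, ∑ i, ∑ j, ∑ h, ∑ k, t h k i j l :=
        Finset.sum_congr rfl fun l _ => Finset.sum_congr rfl fun i _ => Finset.sum_comm

/-- Rearrangement of a four-fold sum. -/
lemma sum_swap4 {M : Type*} [AddCommMonoid M] {a b : ℕ}
    (t : Fin b → Fin a → Fin a → Fin a → M) :
    ∑ i, ∑ h, ∑ k, ∑ l, t i h k l = ∑ l, ∑ i, ∑ h, ∑ k, t i h k l := by
  calc ∑ i, ∑ h, ∑ k, ∑ l, t i h k l
      = ∑ i, ∑ h, ∑ l, ∑ k, t i h k l :=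
        Finset.sum_congr rfl fun i _ => Finset.sum_congr rfl fun h _ => Finset.sum_comm
    _ = ∑ i, ∑ l, ∑ h, ∑ k, t i h k l :=
        Finset.sum_congr rfl fun i _ => Finset.sum_comm
    _ = ∑ l, ∑ i, ∑ h, ∑ k, t i h k l := Finset.sum_comm

theorem statement18 (d m : ℕ) (hd : 0 < d) (hm : 0 < m)
    (q : Fin d → Fin d → (Fin d → ℝ) → ℝ)
    (g : Fin m → Fin m → (Fin d → ℝ) → ℝ) (ΛG : ℝ) (hΛG : 0 < ΛG)
    -- `Q(x)` is symmetric and positive definite: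
    (hsym : ∀ (x : Fin d → ℝ) (h k : Fin d), q h k x = q k h x)
    (hposdef : ∀ (x : Fin d → ℝ) (ξ : Fin d → ℝ), ξ ≠ 0 →
      0 < ∑ h, ∑ k, q h k x * ξ h * ξ k)
    -- `G` has nonnegative bounded entries and `(G(x)ξ, ξ) ≥ 0`:
    (hgnonneg : ∀ (i j : Fin m) (x : Fin d → ℝ), 0 ≤ g i j x)
    (hgbdd : ∀ i j : Fin m, ∃ M : ℝ, ∀ x : Fin d → ℝ, g i j x ≤ M)
    (hGpos : ∀ (x : Fin d → ℝ) (ξ : Fin m → ℝ), 0 ≤ ∑ i, ∑ j, g i j x * ξ j * ξ i)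
    -- `(G(x)ξ, ξ) ≤ Λ_G |ξ|²` and `Σ_{i,j} g_{ij}(x) η_i ξ_j ≤ Λ_G |η| |ξ|`:
    (hG1 : ∀ (x : Fin d → ℝ) (ξ : Fin m → ℝ),
      ∑ i, ∑ j, g i j x * ξ j * ξ i ≤ ΛG * ∑ i, ξ i ^ 2)
    (hG2 : ∀ (x : Fin d → ℝ) (η ξ : Fin m → ℝ),
      ∑ i, ∑ j, g i j x * η i * ξ j ≤
        ΛG * Real.sqrt (∑ i, η i ^ 2) * Real.sqrt (∑ i, ξ i ^ 2)) :
    ∀ (x : Fin d → ℝ) (θ : Fin d → Fin m → ℂ),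
      0 ≤ (Aform (fun h k i j y => q h k y * g i j y) x θ).re ∧
      (Aform (fun h k i j y => q h k y * g i j y) x θ).re ≤
        ΛG * (Qdiagform q x θ).re ∧
      |(Aform (fun h k i j y => q h k y * g i j y) x θ).im| ≤
        ΛG * (Qdiagform q x θ).re := by
  intro x θ
  -- Decompose the positive semidefinite matrix `Q(x)` as `Cᵀ C`.
  have hpsd : (Matrix.of fun h k => q h k x).PosSemidef := by
    refine Matrix.PosSemidef.of_dotProduct_mulVec_nonneg ?_ ?_
    · ext h k
      simp [Matrix.conjTranspose_apply, hsym x k h]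
    · intro ξ
      by_cases hξ : ξ = 0
      · simp [hξ]
      · have hlt := (hposdef x ξ hξ).le
        simp only [dotProduct, Matrix.mulVec, star_trivial, Matrix.of_apply]
        calc (0:ℝ) ≤ ∑ h, ∑ k, q h k x * ξ h * ξ k := hlt
          _ = ∑ h, ξ h * ∑ k, q h k x * ξ k := by
              refine Finset.sum_congr rfl fun h _ => ?_
              rw [Finset.mul_sum]
              exact Finset.sum_congr rfl fun k _ => by ring
  open scoped MatrixOrder in
  obtain ⟨C, hC⟩ := CStarAlgebra.nonneg_iff_eq_star_mul_self.mp hpsd.nonneg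
  have hq : ∀ h k, q h k x = ∑ l, C l h * C l k := by
    intro h k
    have := congrFun (congrFun hC h) k
    simpa [Matrix.mul_apply, Matrix.star_eq_conjTranspose, Matrix.conjTranspose_apply] using this
  -- The vectors `w l = C l · θ`.
  set w : Fin d → Fin m → ℂ := fun l i => ∑ k, (C l k : ℂ) * θ k i with hw
  set a : Fin d → Fin m → ℝ := fun l i => (w l i).re with ha
  set b : Fin d → Fin m → ℝ := fun l i => (w l i).im with hb
  -- Rewrite `Aform` in terms of `w`.
  have hA : Aform (fun h k i j y => q h k y * g i j y) x θ
      = ∑ l, ∑ i, ∑ j, (g i j x : ℂ) * w l j * conj (w l i) := by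
    have lhs_eq : Aform (fun h k i j y => q h k y * g i j y) x θ
        = ∑ h, ∑ k, ∑ i, ∑ j, ∑ l,
            (C l h : ℂ) * (C l k) * (g i j x) * θ k j * conj (θ h i) := by
      simp only [Aform]
      refine Finset.sum_congr rfl fun h _ => Finset.sum_congr rfl fun k _ =>
        Finset.sum_congr rfl fun i _ => Finset.sum_congr rfl fun j _ => ?_
      rw [hq h k]
      push_cast
      rw [Finset.sum_mul, Finset.sum_mul, Finset.sum_mul]
    have rhs_eq : ∑ l, ∑ i, ∑ j, (g i j x : ℂ) * w l j * conj (w l i)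
        = ∑ l, ∑ i, ∑ j, ∑ h, ∑ k,
            (C l h : ℂ) * (C l k) * (g i j x) * θ k j * conj (θ h i) := by
      refine Finset.sum_congr rfl fun l _ => Finset.sum_congr rfl fun i _ =>
        Finset.sum_congr rfl fun j _ => ?_
      calc (g i j x : ℂ) * w l j * conj (w l i)
          = (g i j x : ℂ) *
              ((∑ k, (C l k : ℂ) * θ k j) * (∑ h, (C l h : ℂ) * conj (θ h i))) := by
            rw [mul_assoc]
            simp only [hw, map_sum, map_mul, Complex.conj_ofReal]
        _ = ∑ k, ∑ h, (g i j x : ℂ) *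
              (((C l k : ℂ) * θ k j) * ((C l h : ℂ) * conj (θ h i))) := by
            rw [Finset.sum_mul_sum]
            simp only [Finset.mul_sum]
        _ = ∑ h, ∑ k, (g i j x : ℂ) *
              (((C l k : ℂ) * θ k j) * ((C l h : ℂ) * conj (θ h i))) := Finset.sum_comm
        _ = ∑ h, ∑ k, (C l h : ℂ) * (C l k) * (g i j x) * θ k j * conj (θ h i) :=
            Finset.sum_congr rfl fun h _ => Finset.sum_congr rfl fun k _ => by ring
    rw [lhs_eq, sum_swap5, rhs_eq]
  -- Rewrite `Qdiagform` in terms of `w`.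
  have hQ : Qdiagform q x θ = ∑ l, ∑ i, w l i * conj (w l i) := by
    have lhs_eq : Qdiagform q x θ
        = ∑ i, ∑ h, ∑ k, ∑ l, (C l h : ℂ) * (C l k) * θ k i * conj (θ h i) := by
      simp only [Qdiagform]
      refine Finset.sum_congr rfl fun i _ => Finset.sum_congr rfl fun h _ =>
        Finset.sum_congr rfl fun k _ => ?_
      rw [hq h k]
      push_cast
      rw [Finset.sum_mul, Finset.sum_mul]
    have rhs_eq : ∑ l, ∑ i, w l i * conj (w l i)
        = ∑ l, ∑ i, ∑ h, ∑ k, (C l h : ℂ) * (C l k) * θ k i * conj (θ h i) := by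
      refine Finset.sum_congr rfl fun l _ => Finset.sum_congr rfl fun i _ => ?_
      calc w l i * conj (w l i)
          = (∑ k, (C l k : ℂ) * θ k i) * (∑ h, (C l h : ℂ) * conj (θ h i)) := by
            simp only [hw, map_sum, map_mul, Complex.conj_ofReal]
        _ = ∑ k, ∑ h, ((C l k : ℂ) * θ k i) * ((C l h : ℂ) * conj (θ h i)) :=
            Finset.sum_mul_sum _ _ _ _
        _ = ∑ h, ∑ k, ((C l k : ℂ) * θ k i) * ((C l h : ℂ) * conj (θ h i)) :=
            Finset.sum_comm
        _ = ∑ h, ∑ k, (C l h : ℂ) * (C l k) * θ k i * conj (θ h i) :=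
            Finset.sum_congr rfl fun h _ => Finset.sum_congr rfl fun k _ => by ring
    rw [lhs_eq, sum_swap4, rhs_eq]
  -- Componentwise computations of real and imaginary parts.
  have hre_term : ∀ l i j, ((g i j x : ℂ) * w l j * conj (w l i)).re
      = g i j x * a l j * a l i + g i j x * b l j * b l i := by
    intro l i j
    simp only [ha, hb, Complex.mul_re, Complex.mul_im, Complex.conj_re, Complex.conj_im,
      Complex.ofReal_re, Complex.ofReal_im]
    ring
  have him_term : ∀ l i j, ((g i j x : ℂ) * w l j * conj (w l i)).im
      = g i j x * a l i * b l j - g i j x * b l i * a l j := by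
    intro l i j
    simp only [ha, hb, Complex.mul_re, Complex.mul_im, Complex.conj_re, Complex.conj_im,
      Complex.ofReal_re, Complex.ofReal_im]
    ring
  have hSre : ∀ l, (∑ i, ∑ j, (g i j x : ℂ) * w l j * conj (w l i)).re
      = (∑ i, ∑ j, g i j x * a l j * a l i) + (∑ i, ∑ j, g i j x * b l j * b l i) := by
    intro l
    rw [Complex.re_sum, ← Finset.sum_add_distrib]
    refine Finset.sum_congr rfl fun i _ => ?_
    rw [Complex.re_sum, ← Finset.sum_add_distrib]
    exact Finset.sum_congr rfl fun j _ => hre_term l i j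
  have hSim : ∀ l, (∑ i, ∑ j, (g i j x : ℂ) * w l j * conj (w l i)).im
      = (∑ i, ∑ j, g i j x * a l i * b l j) - (∑ i, ∑ j, g i j x * b l i * a l j) := by
    intro l
    rw [Complex.im_sum, ← Finset.sum_sub_distrib]
    refine Finset.sum_congr rfl fun i _ => ?_
    rw [Complex.im_sum, ← Finset.sum_sub_distrib]
    exact Finset.sum_congr rfl fun j _ => him_term l i j
  -- `Qdiagform` real part.
  have hQre : (Qdiagform q x θ).re
      = ∑ l, ((∑ i, a l i ^ 2) + (∑ i, b l i ^ 2)) := by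
    rw [hQ, Complex.re_sum]
    refine Finset.sum_congr rfl fun l _ => ?_
    rw [Complex.re_sum, ← Finset.sum_add_distrib]
    refine Finset.sum_congr rfl fun i _ => ?_
    simp only [ha, hb, Complex.mul_re, Complex.conj_re, Complex.conj_im]
    ring
  have hAnn : ∀ l, (0:ℝ) ≤ ∑ i, a l i ^ 2 :=
    fun l => Finset.sum_nonneg fun i _ => sq_nonneg _
  have hBnn : ∀ l, (0:ℝ) ≤ ∑ i, b l i ^ 2 :=
    fun l => Finset.sum_nonneg fun i _ => sq_nonneg _
  -- Per-`l` bounds.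
  have h1 : ∀ l, 0 ≤ (∑ i, ∑ j, (g i j x : ℂ) * w l j * conj (w l i)).re := by
    intro l
    rw [hSre l]
    exact add_nonneg (hGpos x (a l)) (hGpos x (b l))
  have h2 : ∀ l, (∑ i, ∑ j, (g i j x : ℂ) * w l j * conj (w l i)).re
      ≤ ΛG * ((∑ i, a l i ^ 2) + (∑ i, b l i ^ 2)) := by
    intro l
    rw [hSre l, mul_add]
    exact add_le_add (hG1 x (a l)) (hG1 x (b l))
  have h3 : ∀ l, |(∑ i, ∑ j, (g i j x : ℂ) * w l j * conj (w l i)).im|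
      ≤ ΛG * ((∑ i, a l i ^ 2) + (∑ i, b l i ^ 2)) := by
    intro l
    rw [hSim l]
    set P := ∑ i, ∑ j, g i j x * a l i * b l j with hP
    set N := ∑ i, ∑ j, g i j x * b l i * a l j with hN
    set K := ΛG * Real.sqrt (∑ i, a l i ^ 2) * Real.sqrt (∑ i, b l i ^ 2) with hK
    have hP1 : P ≤ K := hG2 x (a l) (b l)
    have hN1 : N ≤ K := by
      have h := hG2 x (b l) (a l)
      exact h.trans (le_of_eq (by rw [hK]; ring))
    have hP2 : -K ≤ P := by
      have h := hG2 x (a l) (fun i => -(b l i))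
      simp only [mul_neg, Finset.sum_neg_distrib, neg_sq] at h
      have h' : -P ≤ K := by
        rw [hK, hP]
        exact h.trans (le_of_eq (by ring))
      linarith
    have hN2 : -K ≤ N := by
      have h := hG2 x (b l) (fun i => -(a l i))
      simp only [mul_neg, Finset.sum_neg_distrib, neg_sq] at h
      have h' : -N ≤ K := by
        rw [hK, hN]
        exact h.trans (le_of_eq (by ring))
      linarith
    have habs : |P - N| ≤ 2 * K := abs_le.mpr ⟨by linarith, by linarith⟩
    have h2K : 2 * K ≤ ΛG * ((∑ i, a l i ^ 2) + (∑ i, b l i ^ 2)) := by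
      have hsA := Real.sq_sqrt (hAnn l)
      have hsB := Real.sq_sqrt (hBnn l)
      have := mul_nonneg hΛG.le
        (sq_nonneg (Real.sqrt (∑ i, a l i ^ 2) - Real.sqrt (∑ i, b l i ^ 2)))
      rw [hK]
      nlinarith [Real.sqrt_nonneg (∑ i, a l i ^ 2), Real.sqrt_nonneg (∑ i, b l i ^ 2)]
    exact habs.trans h2K
  refine ⟨?_, ?_, ?_⟩
  · rw [hA, Complex.re_sum]
    exact Finset.sum_nonneg fun l _ => h1 l
  · rw [hA, Complex.re_sum, hQre, Finset.mul_sum]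
    exact Finset.sum_le_sum fun l _ => h2 l
  · rw [hA, Complex.im_sum, hQre, Finset.mul_sum]
    calc |∑ l, (∑ i, ∑ j, (g i j x : ℂ) * w l j * conj (w l i)).im|
        ≤ ∑ l, |(∑ i, ∑ j, (g i j x : ℂ) * w l j * conj (w l i)).im| :=
          Finset.abs_sum_le_sum_abs _ _
      _ ≤ ∑ l, ΛG * ((∑ i, a l i ^ 2) + (∑ i, b l i ^ 2)) :=
          Finset.sum_le_sum fun l _ => h3 l
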